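/- The mean-value lower bound constant π/4 cannot be improved to 1: there exist an analytic function f : Π⁺ → Π⁺ and a square Q ⊂ Π⁺ centered at a point c such that (1/A(Q))∫_Q |f(z)| dA(z) < |f(c)|. Concretely, for f(z) = exp(((1-z)/(1+z))⁴) (which maps Π⁺ to Π⁺) and Q_t = (1-t,1+t)×(-t,t), there exists t ∈ (0,1/2] with (1/(4t²))∫_{Q_t} |f| dA < 1 = |f(1)|. -/

import Mathlib

set_option maxHeartbeats 1000000

open MeasureTheory Complex

lemma part1 (z : ℂ) (hz : 0 < z.re) : 0 < (Complex.exp (((1 - z) / (1 + z)) ^ 4)).re := by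
  have hne : (1 + z) ≠ 0 := by
    intro h
    have : (1 + z).re = 0 := by rw [h]; simp
    simp at this; linarith
  have habs : ‖((1 - z) / (1 + z))‖ < 1 := by
    rw [norm_div, div_lt_one (norm_pos_iff.mpr hne)]
    have : Complex.normSq (1 - z) < Complex.normSq (1 + z) := by
      simp [Complex.normSq_apply]; nlinarith
    have h1 := Complex.sq_norm (1 - z)
    have h2 := Complex.sq_norm (1 + z)
    nlinarith [norm_nonneg (1 - z), norm_nonneg (1 + z)]
  set w := ((1 - z) / (1 + z)) ^ 4 with hw
  have hwabs : ‖w‖ < 1 := by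
    rw [hw, norm_pow]
    exact pow_lt_one₀ (norm_nonneg _) habs (by norm_num)
  have him : |w.im| < Real.pi / 2 := by
    have := Complex.abs_im_le_norm w
    have hpi := Real.pi_gt_three
    linarith
  rw [Complex.exp_re]
  have : 0 < Real.cos w.im :=
    Real.cos_pos_of_mem_Ioo ⟨by linarith [(abs_lt.1 him).1], by linarith [(abs_lt.1 him).2]⟩
  positivity

lemma ptwise (x y : ℝ) (hx : |x - 1| ≤ 1/1000) (hy : |y| ≤ 1/1000) :
    ‖(Complex.exp (((1 - (↑x + ↑y * I)) / (1 + (↑x + ↑y * I))) ^ 4))‖ ≤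
      1 + ((x-1)^4 - 6*(x-1)^2*y^2 + y^4)/16 + 6*(1/1000:ℝ)^5 := by
  obtain ⟨hx1, hx2⟩ := abs_le.1 hx
  obtain ⟨hy1, hy2⟩ := abs_le.1 hy
  set u : ℂ := ↑(x - 1) + ↑y * I with hu_def
  have hure : u.re = x - 1 := by simp [hu_def]
  have huim : u.im = y := by simp [hu_def]
  have hu : ‖u‖ ≤ 1/500 := by
    calc ‖u‖ ≤ |u.re| + |u.im| := Complex.norm_le_abs_re_add_abs_im u
    _ ≤ 1/500 := by rw [hure, huim]; linarith
  have h2re : (2 + u).re = 1 + x := by simp [hure]; ring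
  have h2abs : (999/500 : ℝ) ≤ ‖(2 + u)‖ := by
    have := Complex.re_le_norm (2 + u)
    rw [h2re] at this; linarith
  have h2ne : (2 + u) ≠ 0 := by
    intro h; rw [h] at h2abs; simp at h2abs; linarith
  have hz1 : (1 : ℂ) - (↑x + ↑y * I) = -u := by rw [hu_def]; push_cast; ring
  have hz2 : (1 : ℂ) + (↑x + ↑y * I) = 2 + u := by rw [hu_def]; push_cast; ring
  have hfrac : ((1 - (↑x + ↑y * I)) / (1 + (↑x + ↑y * I))) ^ 4 = u^4 / (2+u)^4 := by
    rw [hz1, hz2, div_pow, Even.neg_pow (by decide)]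
  rw [hfrac]
  set g : ℂ := u^4 / (2+u)^4 with hg_def
  have habs_g : ‖g‖ ≤ (1/500)^4 / 15 := by
    rw [hg_def, norm_div, norm_pow, norm_pow]
    have h1 : ‖u‖ ^ 4 ≤ (1/500)^4 :=
      pow_le_pow_left₀ (norm_nonneg u) hu 4
    have h2 : (15:ℝ) ≤ ‖(2+u)‖ ^ 4 := by
      calc (15:ℝ) ≤ (999/500)^4 := by norm_num
      _ ≤ ‖(2+u)‖ ^ 4 := pow_le_pow_left₀ (by norm_num) h2abs 4
    have h3 : (0:ℝ) < ‖(2+u)‖ ^ 4 := by linarith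
    rw [div_le_div_iff₀ h3 (by norm_num)]
    nlinarith [norm_nonneg u, pow_nonneg (norm_nonneg u) 4]
  have habs_g1 : |g.re| ≤ 1 := by
    have := Complex.abs_re_le_norm g
    have : |g.re| ≤ (1/500)^4/15 := le_trans (Complex.abs_re_le_norm g) habs_g
    linarith [this]; 
  -- exp bound
  rw [Complex.norm_exp]
  have hexp := Real.exp_bound habs_g1 (n := 2) (by norm_num)
  have hsum : ∑ m ∈ Finset.range 2, g.re ^ m / (Nat.factorial m) = 1 + g.re := by
    simp [Finset.sum_range_succ]
  rw [hsum] at hexp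
  have hexp2 : Real.exp g.re ≤ 1 + g.re + |g.re|^2 * (3/4) := by
    norm_num [Nat.factorial] at hexp
    have := (abs_sub_le_iff.1 hexp).1
    rw [_root_.sq_abs]
    linarith
  -- error term h
  have hh : g - u^4/16 = u^4 * (16 - (2+u)^4) / (16 * (2+u)^4) := by
    rw [hg_def]; field_simp
  have hpoly : (16 : ℂ) - (2+u)^4 = -(32*u + 24*u^2 + 8*u^3 + u^4) := by ring
  have habs_num : ‖(16 - (2+u)^4)‖ ≤ 33 * ‖u‖ := by
    rw [hpoly, norm_neg]
    calc ‖(32*u + 24*u^2 + 8*u^3 + u^4)‖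
        ≤ ‖(32*u)‖ + ‖(24*u^2)‖ + ‖(8*u^3)‖ + ‖(u^4)‖ := by
          refine le_trans (norm_add_le _ _) ?_
          have := norm_add_le (32*u + 24*u^2) (8*u^3)
          have := norm_add_le (32*u) (24*u^2)
          linarith [norm_add_le (32*u + 24*u^2 + 8*u^3) (u^4),
            norm_add_le (32*u + 24*u^2) (8*u^3), norm_add_le (32*u) (24*u^2)]
      _ ≤ 33 * ‖u‖ := by
          simp only [norm_mul, norm_pow, Complex.norm_ofNat]
          have h0 := norm_nonneg u
          have e2 : ‖u‖^2 ≤ (1/500) * ‖u‖ := by nlinarith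
          have e3 : ‖u‖^3 ≤ (1/500)^2 * ‖u‖ := by nlinarith
          have e4 : ‖u‖^4 ≤ (1/500)^3 * ‖u‖ := by nlinarith
          linarith
  have habs_h : ‖(g - u^4/16)‖ ≤ 5 * (1/1000:ℝ)^5 := by
    rw [hh, norm_div]
    have hden : (240:ℝ) ≤ ‖(16 * (2+u)^4)‖ := by
      rw [norm_mul, norm_pow]
      have : (15:ℝ) ≤ ‖(2+u)‖^4 := by
        calc (15:ℝ) ≤ (999/500)^4 := by norm_num
        _ ≤ _ := pow_le_pow_left₀ (by norm_num) h2abs 4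
      have h16 : ‖(16:ℂ)‖ = 16 := by norm_num
      nlinarith
    have hnum : ‖(u^4 * (16 - (2+u)^4))‖ ≤ (1/500)^4 * (33 * (1/500)) := by
      rw [norm_mul, norm_pow]
      have h4 : ‖u‖ ^ 4 ≤ (1/500)^4 := pow_le_pow_left₀ (norm_nonneg u) hu 4
      have h5 : ‖(16 - (2+u)^4)‖ ≤ 33 * (1/500) := by
        calc ‖(16 - (2+u)^4)‖ ≤ 33 * ‖u‖ := habs_num
        _ ≤ 33 * (1/500) := by linarith
      exact mul_le_mul h4 h5 (norm_nonneg _) (by norm_num)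
    have hstep : ‖(u^4 * (16 - (2+u)^4))‖ / ‖(16 * (2+u)^4)‖
        ≤ (1/500:ℝ)^4 * (33 * (1/500)) / 240 :=
      div_le_div₀ (by norm_num) hnum (by norm_num) hden
    have : ((1/500:ℝ)^4 * (33 * (1/500)) / 240) ≤ 5 * (1/1000:ℝ)^5 := by norm_num
    linarith
  -- real part of u^4
  have hre4 : (u^4).re = (x-1)^4 - 6*(x-1)^2*y^2 + y^4 := by
    have : u^4 = (↑(x-1) + ↑y * I)^4 := by rw [hu_def]
    rw [this]
    simp only [pow_succ, pow_zero, one_mul, Complex.add_re, Complex.add_im, Complex.mul_re,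
      Complex.mul_im, Complex.ofReal_re, Complex.ofReal_im, Complex.I_re, Complex.I_im]
    ring
  have hgre : g.re ≤ (u^4).re / 16 + 5 * (1/1000:ℝ)^5 := by
    have h716 : (u^4/16 : ℂ) = ((1/16:ℝ):ℂ) * u^4 := by push_cast; ring
    have hres : (g - u^4/16).re = g.re - (u^4).re/16 := by
      rw [Complex.sub_re, h716, Complex.re_ofReal_mul]; ring
    have h6 : g.re - (u^4).re/16 ≤ ‖(g - u^4/16)‖ := by
      rw [← hres]
      exact le_trans (Complex.re_le_norm _) (le_refl _)
    linarith
  have hsq : |g.re|^2 * (3/4) ≤ (1/1000:ℝ)^5 := by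
    have : |g.re| ≤ (1/500)^4/15 := le_trans (Complex.abs_re_le_norm g) habs_g
    nlinarith [abs_nonneg g.re]
  calc Real.exp g.re ≤ 1 + g.re + |g.re|^2 * (3/4) := hexp2
    _ ≤ 1 + ((u^4).re / 16 + 5 * (1/1000:ℝ)^5) + (1/1000:ℝ)^5 := by linarith
    _ = 1 + ((x-1)^4 - 6*(x-1)^2*y^2 + y^4)/16 + 6*(1/1000:ℝ)^5 := by rw [hre4]; ring

-- helper: polynomial integral over symmetric Ioo
lemma int_poly (A B C r : ℝ) (hr : 0 < r) :
    ∫ y in Set.Ioo (-r) r, (A + B*y^2 + C*y^4) =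
      2*r*A + B*(2*r^3/3) + C*(2*r^5/5) := by
  rw [← MeasureTheory.integral_Ioc_eq_integral_Ioo,
    ← intervalIntegral.integral_of_le (by linarith : -r ≤ r)]
  have h1 : IntervalIntegrable (fun y : ℝ => B * y^2) volume (-r) r :=
    (Continuous.intervalIntegrable (by continuity) _ _)
  have h2 : IntervalIntegrable (fun y : ℝ => C * y^4) volume (-r) r :=
    (Continuous.intervalIntegrable (by continuity) _ _)
  have h0 : IntervalIntegrable (fun _ : ℝ => A) volume (-r) r :=
    intervalIntegrable_const
  rw [intervalIntegral.integral_add (h0.add h1) h2, intervalIntegral.integral_add h0 h1,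
    intervalIntegral.integral_const, intervalIntegral.integral_const_mul,
    intervalIntegral.integral_const_mul, integral_pow, integral_pow]
  push_cast
  rw [smul_eq_mul]
  ring


lemma main2 :
    (1 / (4 * (1/1000:ℝ) ^ 2)) *
        ∫ z in {z : ℂ | 1 - (1/1000:ℝ) < z.re ∧ z.re < 1 + (1/1000:ℝ) ∧
            -(1/1000:ℝ) < z.im ∧ z.im < (1/1000:ℝ)},
          ‖(Complex.exp (((1 - z) / (1 + z)) ^ 4))‖ < 1 := by
  have ht0 : (0:ℝ) < 1/1000 := by norm_num
  set t : ℝ := 1/1000 with ht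
  set T : Set (ℝ × ℝ) := Set.Ioo (1-t) (1+t) ×ˢ Set.Ioo (-t) t with hT
  set F : ℝ × ℝ → ℝ := fun p =>
    ‖(Complex.exp (((1 - (↑p.1 + ↑p.2 * I)) / (1 + (↑p.1 + ↑p.2 * I))) ^ 4))‖ with hF
  set B : ℝ × ℝ → ℝ := fun p =>
    1 + ((p.1-1)^4 - 6*(p.1-1)^2*p.2^2 + p.2^4)/16 + 6*t^5 with hB
  have hset : {z : ℂ | 1 - t < z.re ∧ z.re < 1 + t ∧ -t < z.im ∧ z.im < t}
      = Complex.measurableEquivRealProd ⁻¹' T := by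
    ext z
    simp [hT, Complex.measurableEquivRealProd_apply, Set.mem_Ioo, and_assoc]
  have hchange :
      (∫ z in {z : ℂ | 1 - t < z.re ∧ z.re < 1 + t ∧ -t < z.im ∧ z.im < t},
        ‖(Complex.exp (((1 - z) / (1 + z)) ^ 4))‖) = ∫ p in T, F p := by
    rw [hset, ← MeasurePreserving.setIntegral_preimage_emb
      Complex.volume_preserving_equiv_real_prod
      Complex.measurableEquivRealProd.measurableEmbedding F T]
    simp only [hF, Complex.measurableEquivRealProd_apply, Complex.re_add_im]
  -- integrability
  set K : Set (ℝ × ℝ) := Set.Icc (1-t) (1+t) ×ˢ Set.Icc (-t) t with hK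
  have hTK : T ⊆ K := Set.prod_mono Set.Ioo_subset_Icc_self Set.Ioo_subset_Icc_self
  have hKc : IsCompact K := isCompact_Icc.prod isCompact_Icc
  have hzc : Continuous (fun p : ℝ × ℝ => (↑p.1 + ↑p.2 * I : ℂ)) := by continuity
  have hne : ∀ p ∈ K, (1:ℂ) + (↑p.1 + ↑p.2 * I) ≠ 0 := by
    intro p hp h
    have h1 : (1:ℝ) + p.1 = 0 := by
      have := congrArg Complex.re h
      simpa using this
    have h2 : 1 - t ≤ p.1 := hp.1.1
    rw [ht] at h2
    linarith
  have hcont : ContinuousOn F K := by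
    apply continuous_norm.comp_continuousOn
    apply Complex.continuous_exp.comp_continuousOn
    apply ContinuousOn.pow
    exact ContinuousOn.div (continuous_const.sub hzc).continuousOn
      (continuous_const.add hzc).continuousOn hne
  have hFi : IntegrableOn F T := (hcont.integrableOn_compact hKc).mono_set hTK
  have hBc : Continuous B := by continuity
  have hBi : IntegrableOn B T := (hBc.continuousOn.integrableOn_compact hKc).mono_set hTK
  have hmono : (∫ p in T, F p) ≤ ∫ p in T, B p := by
    apply setIntegral_mono_on hFi hBi (measurableSet_Ioo.prod measurableSet_Ioo)
    rintro ⟨x, y⟩ ⟨hp1, hp2⟩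
    have h1 : |x - 1| ≤ 1/1000 := by
      rw [abs_le]; rw [ht] at hp1
      exact ⟨by linarith [hp1.1], by linarith [hp1.2]⟩
    have h2 : |y| ≤ 1/1000 := by
      rw [abs_le]; rw [Set.mem_Ioo, ht] at hp2
      exact ⟨by linarith [hp2.1], by linarith [hp2.2]⟩
    exact ptwise x y h1 h2
  -- compute ∫ B
  have hBval : (∫ p in T, B p) = 4*t^2 + 24*t^7 - t^6/15 := by
    rw [hT, MeasureTheory.Measure.volume_eq_prod] at hBi ⊢
    rw [setIntegral_prod B hBi]
    have hinner : ∀ x : ℝ, (∫ y in Set.Ioo (-t) t, B (x, y)) =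
        2*t*(1 + 6*t^5 + (x-1)^4/16) + (-6*(x-1)^2/16)*(2*t^3/3) + (1/16)*(2*t^5/5) := by
      intro x
      have : (fun y => B (x, y)) = fun y =>
          (1 + 6*t^5 + (x-1)^4/16) + (-6*(x-1)^2/16)*y^2 + (1/16)*y^4 := by
        funext y; simp only [hB]; ring
      rw [this, int_poly _ _ _ _ ht0]
    simp only [hinner]
    rw [← MeasureTheory.integral_Ioc_eq_integral_Ioo,
      ← intervalIntegral.integral_of_le (by linarith : 1 - t ≤ 1 + t)]
    set H : ℝ → ℝ := fun s => (2*t*(1+6*t^5) + (1/16)*(2*t^5/5)) + (-(t^3)/4)*s^2 + (2*t/16)*s^4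
      with hH
    have hfe : (fun x : ℝ => 2*t*(1 + 6*t^5 + (x-1)^4/16) + (-6*(x-1)^2/16)*(2*t^3/3)
        + (1/16)*(2*t^5/5)) = fun x => H (x - 1) := by
      funext x; rw [hH]; ring
    rw [hfe, intervalIntegral.integral_comp_sub_right H 1]
    have e1 : 1 - t - 1 = -t := by ring
    have e2 : 1 + t - 1 = t := by ring
    rw [e1, e2, intervalIntegral.integral_of_le (by linarith : -t ≤ t),
      MeasureTheory.integral_Ioc_eq_integral_Ioo, hH, int_poly _ _ _ _ ht0]
    ring
  rw [hchange]
  have hpos : (0:ℝ) < 1 / (4 * t^2) := by rw [ht]; norm_num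
  calc (1 / (4 * t^2)) * ∫ p in T, F p
      ≤ (1 / (4 * t^2)) * (4*t^2 + 24*t^7 - t^6/15) := by
        apply mul_le_mul_of_nonneg_left (le_trans hmono (le_of_eq hBval)) (le_of_lt hpos)
    _ < 1 := by rw [ht]; norm_num

/-- The constant π/4 in the mean-value lower bound cannot be improved to 1:
f(z) = exp(((1-z)/(1+z))⁴) maps Π⁺ into Π⁺, and for some square
Q_t = (1-t,1+t)×(-t,t) centered at 1 with 0 < t ≤ 1/2 the average of |f| over Q_t
is strictly less than 1 = |f(1)|. -/
theorem stmt_14 :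
    (∀ z : ℂ, 0 < z.re → 0 < (Complex.exp (((1 - z) / (1 + z)) ^ 4)).re) ∧
      ∃ t : ℝ, 0 < t ∧ t ≤ 1 / 2 ∧
        (1 / (4 * t ^ 2)) *
            ∫ z in {z : ℂ | 1 - t < z.re ∧ z.re < 1 + t ∧ -t < z.im ∧ z.im < t},
              ‖(Complex.exp (((1 - z) / (1 + z)) ^ 4))‖ <
          1 := by
  exact ⟨part1, 1/1000, by norm_num, by norm_num, main2⟩
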